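/- Suppose P(Z(h) > -∞) = 1 for h∈T. Then for any distinct points t_1 = h, t_2, …, t_n ∈ T, the random vector (Ξ_h Z(t_2), …, Ξ_h Z(t_n)) has the same distribution as (W_2^{(1)} − W_1^{(1)}, …, W_n^{(1)} − W_1^{(1)}), where W^{(1)} is distributed as W conditioned on (W_1 > 0) and W is the associated generalised Pareto vector of (ζ_Z(t_1), …, ζ_Z(t_n)). -/

import Mathlib

open MeasureTheory ProbabilityTheory Filter
open scoped ENNReal NNReal

noncomputable section

/-- `e^x` for `x ∈ [-∞,∞]`, as an extended nonnegative real. -/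
def expE (x : EReal) : ℝ≥0∞ :=
  if x = ⊤ then ⊤ else if x = ⊥ then 0 else ENNReal.ofReal (Real.exp x.toReal)

/-- `e^{-L}` for `L ∈ [0,∞]`. -/
def expNeg (L : ℝ≥0∞) : ℝ≥0∞ :=
  if L = ⊤ then 0 else ENNReal.ofReal (Real.exp (-L.toReal))

/-- natural logarithm, from `[0,∞]` to `[-∞,∞]`. -/
def logE (L : ℝ≥0∞) : EReal :=
  if L = 0 then ⊥ else if L = ⊤ then ⊤ else ((Real.log L.toReal : ℝ) : EReal)

/-- Equality of all finite-dimensional distributions of two processes. -/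
def SameFDD {T E Ω₁ Ω₂ : Type*} [MeasurableSpace Ω₁] [MeasurableSpace Ω₂] [MeasurableSpace E]
    (μ₁ : Measure Ω₁) (X : T → Ω₁ → E) (μ₂ : Measure Ω₂) (Y : T → Ω₂ → E) : Prop :=
  ∀ (n : ℕ) (t : Fin n → T),
    Measure.map (fun ω i => X (t i) ω) μ₁ = Measure.map (fun ω i => Y (t i) ω) μ₂

/-- `ζ` is (a version of) the max-stable process associated with the spectral process `Z`,
i.e. its finite-dimensional distributions are the ones of the de Haan representation
`ζ_Z(t) = max_{i ≥ 1} (P_i + Z_i(t))` built from a Poisson point process `Σ ε_{P_i}` on `ℝ`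
with intensity `e^{-x} dx`, independent of the i.i.d. copies `Z_i` of `Z`; equivalently
`P(ζ(t₁) ≤ x₁, …, ζ(tₙ) ≤ xₙ) = exp( - E[ max_i e^{Z(t_i) - x_i} ] )`. -/
def IsAssocMaxStable {T Ω Ω' : Type*} [MeasurableSpace Ω] [MeasurableSpace Ω']
    (μ' : Measure Ω') (ζ : T → Ω' → ℝ) (μ : Measure Ω) (Z : T → Ω → EReal) : Prop :=
  ∀ (n : ℕ) (t : Fin n → T) (x : Fin n → ℝ),
    μ' {ω | ∀ i, ζ (t i) ω ≤ x i}
      = expNeg (∫⁻ ω, ⨆ i, expE (Z (t i) ω - (x i : EReal)) ∂μ)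

/-- The law of the path `ω ↦ Z(·)(ω)` on the product σ-field. -/
def pathLaw {T Ω : Type*} [MeasurableSpace Ω] (μ : Measure Ω) (Z : T → Ω → EReal) :
    Measure (T → EReal) := Measure.map (fun ω t => Z t ω) μ

/-- Law of the exponentially tilted process `Z^{[h]}`:
`P(Z^{[h]} ∈ A) = E[ e^{Z(h)} 1_{Z ∈ A} ]`.  (When `P(Z(h) = -∞) > 0` this is the law of the
tilt `V_h^{[h]}` of the conditional process `V_h = Z | (Z(h) > -∞)` by
`V_h(h) - ln E[e^{V_h(h)}]`, since the density `e^{f(h)}` vanishes on `{f : f(h) = -∞}`.) -/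
def tiltLaw {T Ω : Type*} [MeasurableSpace Ω] (μ : Measure Ω) (Z : T → Ω → EReal) (h : T) :
    Measure (T → EReal) := (pathLaw μ Z).withDensity fun f => expE (f h)

/-- Law of the recentred tilted process `Θ_h = Ξ_h Z`, `Θ_h(t) = Z^{[h]}(t) - Z^{[h]}(h)`
(equal to `Θ_h(t) = V_h^{[h]}(t) - V_h^{[h]}(h)` in the general case). -/
def ThetaLaw {T Ω : Type*} [MeasurableSpace Ω] (μ : Measure Ω) (Z : T → Ω → EReal) (h : T) :
    Measure (T → EReal) := Measure.map (fun f t => f t - f h) (tiltLaw μ Z h)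

section Helpers
open Set

@[simp] lemma expE_top : expE ⊤ = ⊤ := rfl
@[simp] lemma expE_bot : expE ⊥ = 0 := rfl
@[simp] lemma expE_coe (r : ℝ) : expE r = ENNReal.ofReal (Real.exp r) := by
  simp [expE]
@[simp] lemma expE_zero : expE 0 = 1 := by
  have : ((0:ℝ) : EReal) = (0 : EReal) := rfl
  rw [← this, expE_coe]; simp

lemma measurable_expE : Measurable expE := by
  apply EReal.measurable_of_measurable_real
  simpa [Function.comp_def] using ENNReal.measurable_ofReal.comp (Real.measurable_exp.comp measurable_id)

lemma expE_mono : Monotone expE := by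
  intro a b hab
  induction b using EReal.rec with
  | bot => rw [le_bot_iff] at hab; simp [hab]
  | top => simp
  | coe b =>
    induction a using EReal.rec with
    | bot => simp
    | top => exact absurd hab (by simp)
    | coe a =>
      simp only [expE_coe]
      exact ENNReal.ofReal_le_ofReal (Real.exp_le_exp.2 (EReal.coe_le_coe_iff.1 hab))

lemma measurable_ereal_add : Measurable fun p : EReal × EReal => p.1 + p.2 := by
  have hrw : (fun p : EReal × EReal => p.1 + p.2) = fun p =>
      if p.1 = ⊥ ∨ p.2 = ⊥ then ⊥ else if p.1 = ⊤ ∨ p.2 = ⊤ then (⊤ : EReal)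
      else ((p.1.toReal + p.2.toReal : ℝ) : EReal) := by
    funext p
    rcases p with ⟨a, b⟩
    induction a using EReal.rec with
    | bot => simp
    | top =>
      induction b using EReal.rec with
      | bot => simp
      | top => simp
      | coe b => simp
    | coe a =>
      induction b using EReal.rec with
      | bot => simp
      | top => simp
      | coe b => simp [← EReal.coe_add]
  rw [hrw]
  have h1 : MeasurableSet {p : EReal × EReal | p.1 = ⊥ ∨ p.2 = ⊥} := by
    apply MeasurableSet.union
    · exact measurable_fst (measurableSet_singleton ⊥)
    · exact measurable_snd (measurableSet_singleton ⊥)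
  have h2 : MeasurableSet {p : EReal × EReal | p.1 = ⊤ ∨ p.2 = ⊤} := by
    apply MeasurableSet.union
    · exact measurable_fst (measurableSet_singleton ⊤)
    · exact measurable_snd (measurableSet_singleton ⊤)
  refine Measurable.ite h1 measurable_const (Measurable.ite h2 measurable_const ?_)
  exact measurable_coe_real_ereal.comp
    ((measurable_ereal_toReal.comp measurable_fst).add
      (measurable_ereal_toReal.comp measurable_snd))

lemma Measurable.ereal_add' {α : Type*} [MeasurableSpace α] {f g : α → EReal}
    (hf : Measurable f) (hg : Measurable g) : Measurable fun a => f a + g a :=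
  measurable_ereal_add.comp (hf.prodMk hg)

lemma Measurable.ereal_sub' {α : Type*} [MeasurableSpace α] {f g : α → EReal}
    (hf : Measurable f) (hg : Measurable g) : Measurable fun a => f a - g a :=
  hf.ereal_add' ((continuous_neg.measurable).comp hg)

lemma ereal_lt_add_coe_iff {x z : EReal} (hx : x ≠ ⊥) (hz : z ≠ ⊤) (u : ℝ) :
    x < (u : EReal) + z ↔ x - z < (u : EReal) := by
  induction z using EReal.rec with
  | bot =>
    rw [EReal.sub_bot hx]
    simp
  | top => exact absurd rfl hz
  | coe z =>
    induction x using EReal.rec with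
    | bot => exact absurd rfl hx
    | top =>
      rw [EReal.top_sub_coe]
      constructor <;> intro hh
      · exact absurd hh (by rw [← EReal.coe_add]; exact fun h => (lt_irrefl _ (h.trans (EReal.coe_lt_top _))).elim)
      · exact absurd hh (by simp)
    | coe x =>
      rw [← EReal.coe_add, ← EReal.coe_sub, EReal.coe_lt_coe_iff, EReal.coe_lt_coe_iff]
      constructor <;> intro <;> linarith

def expM : Measure ℝ := volume.withDensity fun u => ENNReal.ofReal (Real.exp (-u))

instance : SigmaFinite expM := SigmaFinite.withDensity_ofReal _

lemma expM_apply {s : Set ℝ} (hs : MeasurableSet s) :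
    expM s = ∫⁻ u in s, ENNReal.ofReal (Real.exp (-u)) := by
  rw [expM, withDensity_apply _ hs]

lemma expM_Ioi (c : ℝ) : expM (Ioi c) = ENNReal.ofReal (Real.exp (-c)) := by
  rw [expM_apply measurableSet_Ioi, ← ofReal_integral_eq_lintegral_ofReal]
  · rw [integral_exp_neg_Ioi]
  · simpa [IntegrableOn] using exp_neg_integrableOn_Ioi c one_pos
  · exact Filter.Eventually.of_forall fun x => (Real.exp_pos _).le

lemma expM_univ : expM (univ : Set ℝ) = ⊤ := by
  have h1 : ∫⁻ u in Iic (0:ℝ), 1 ∂volume ≤ ∫⁻ u in Iic (0:ℝ), ENNReal.ofReal (Real.exp (-u)) ∂volume := by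
    refine setLIntegral_mono' measurableSet_Iic fun u hu => ?_
    rw [show (1:ℝ≥0∞) = ENNReal.ofReal (Real.exp 0) by simp]
    exact ENNReal.ofReal_le_ofReal (Real.exp_le_exp.2 (by simpa using hu))
  have h2 : ∫⁻ u in Iic (0:ℝ), (1:ℝ≥0∞) ∂volume = ⊤ := by
    rw [setLIntegral_one, Real.volume_Iic]
  have h3 : ∫⁻ u in Iic (0:ℝ), ENNReal.ofReal (Real.exp (-u)) ∂volume
      ≤ ∫⁻ u, ENNReal.ofReal (Real.exp (-u)) ∂volume :=
    lintegral_mono' Measure.restrict_le_self le_rfl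
  rw [expM_apply MeasurableSet.univ]
  simp only [Measure.restrict_univ]
  exact top_unique (h2 ▸ (h1.trans h3))

/-- measure of the upper ray `{u : ℝ | c < u}` under `e^{-u}du`. -/
lemma expM_ray (c : EReal) : expM {u : ℝ | c < (u : EReal)} = expE (-c) := by
  induction c using EReal.rec with
  | bot =>
    have : {u : ℝ | (⊥:EReal) < (u:EReal)} = univ := by
      ext u; simp [EReal.bot_lt_coe]
    rw [this, expM_univ]; simp
  | top =>
    have : {u : ℝ | (⊤:EReal) < (u:EReal)} = (∅ : Set ℝ) := by
      ext u; simp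
    rw [this]; simp
  | coe c =>
    have : {u : ℝ | (c:EReal) < (u:EReal)} = Ioi c := by
      ext u; simp [EReal.coe_lt_coe_iff]
    rw [this, expM_Ioi, ← EReal.coe_neg, expE_coe]

lemma iInf_eq_min {m : ℕ} (g : Fin (m+1) → EReal) : ∃ i₀, (⨅ i, g i) = g i₀ := by
  obtain ⟨i₀, hi₀⟩ := Finite.exists_min g
  exact ⟨i₀, le_antisymm (iInf_le _ _) (le_iInf hi₀)⟩


lemma kappa_exists_lt {Ω : Type*} [MeasurableSpace Ω] (μ : Measure Ω) [IsProbabilityMeasure μ]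
    {m : ℕ} (Y : Fin (m+1) → Ω → EReal) (hYm : ∀ i, Measurable (Y i))
    (hYtop : ∀ᵐ ω ∂μ, ∀ i, Y i ω ≠ ⊤)
    (x : Fin (m+1) → EReal) (hx : ∀ i, x i ≠ ⊥) :
    (μ.prod expM) {p : Ω × ℝ | ∃ i, x i < (p.2 : EReal) + Y i p.1}
      = ∫⁻ ω, ⨆ i, expE (Y i ω - x i) ∂μ := by
  have hSm : MeasurableSet {p : Ω × ℝ | ∃ i, x i < (p.2 : EReal) + Y i p.1} := by
    rw [Set.setOf_exists]
    refine MeasurableSet.iUnion fun i => ?_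
    have hm : Measurable fun p : Ω × ℝ => (p.2 : EReal) + Y i p.1 :=
      (measurable_coe_real_ereal.comp measurable_snd).ereal_add' ((hYm i).comp measurable_fst)
    exact hm measurableSet_Ioi
  rw [Measure.prod_apply hSm]
  refine lintegral_congr_ae ?_
  filter_upwards [hYtop] with ω hω
  have hterm : ∀ i, -(x i - Y i ω) = Y i ω - x i := by
    intro i
    rw [EReal.neg_sub (Or.inl (hx i)) (Or.inr (hω i)), add_comm]
    rfl
  have hsec : (Prod.mk ω ⁻¹' {p : Ω × ℝ | ∃ i, x i < (p.2:EReal) + Y i p.1})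
      = {u : ℝ | (⨅ i, (x i - Y i ω)) < (u:EReal)} := by
    ext u
    simp only [Set.mem_preimage, Set.mem_setOf_eq, iInf_lt_iff]
    exact exists_congr fun i => ereal_lt_add_coe_iff (hx i) (hω i) u
  rw [hsec, expM_ray]
  obtain ⟨i₀, hmin⟩ := iInf_eq_min (fun i => x i - Y i ω)
  rw [hmin, hterm i₀]
  apply le_antisymm
  · exact le_iSup_of_le i₀ le_rfl
  · refine iSup_le fun i => expE_mono ?_
    have hle : (x i₀ - Y i₀ ω) ≤ x i - Y i ω := hmin ▸ iInf_le _ i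
    rw [← hterm i, ← hterm i₀]
    exact EReal.neg_le_neg_iff.mpr hle

lemma kappa_sec {Ω : Type*} [MeasurableSpace Ω] (μ : Measure Ω)
    (Y : Ω → EReal) (hY : Measurable Y) (hae : ∀ᵐ ω ∂μ, Y ω ≠ ⊤)
    (C : Set Ω) (hC : MeasurableSet C) :
    (μ.prod expM) {p : Ω × ℝ | ((0:EReal) < (p.2 : EReal) + Y p.1) ∧ p.1 ∈ C}
      = ∫⁻ ω in C, expE (Y ω) ∂μ := by
  have hS : MeasurableSet {p : Ω × ℝ | ((0:EReal) < (p.2:EReal) + Y p.1) ∧ p.1 ∈ C} := by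
    have h1 : Measurable fun p : Ω × ℝ => (p.2 : EReal) + Y p.1 :=
      (measurable_coe_real_ereal.comp measurable_snd).ereal_add' (hY.comp measurable_fst)
    exact (h1 measurableSet_Ioi).inter (measurable_fst hC)
  rw [Measure.prod_apply hS, ← lintegral_indicator hC]
  refine lintegral_congr_ae ?_
  filter_upwards [hae] with ω hω
  by_cases hmem : ω ∈ C
  · have hsec : (Prod.mk ω ⁻¹' {p : Ω × ℝ | ((0:EReal) < (p.2:EReal) + Y p.1) ∧ p.1 ∈ C})
        = {u : ℝ | ((0:EReal) - Y ω) < (u:EReal)} := by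
      ext u
      simp only [Set.mem_preimage, Set.mem_setOf_eq, hmem, and_true]
      exact ereal_lt_add_coe_iff (by simp) hω u
    rw [hsec, expM_ray, Set.indicator_of_mem hmem]
    congr 1
    rw [EReal.neg_sub (Or.inl (by simp)) (Or.inr hω), neg_zero, zero_add]
  · have hsec : (Prod.mk ω ⁻¹' {p : Ω × ℝ | ((0:EReal) < (p.2:EReal) + Y p.1) ∧ p.1 ∈ C})
        = (∅ : Set ℝ) := by
      ext u; simp [hmem]
    rw [hsec, Set.indicator_of_notMem hmem]
    simp


/-- the class of "rectangles with no `⊥` corner" in `Fin m → EReal`. -/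
def rectCl (m : ℕ) : Set (Set (Fin m → EReal)) :=
  {s | ∃ x : Fin m → EReal, (∀ i, x i ≠ ⊥) ∧ s = {g | ∀ i, g i ≤ x i}}

lemma isPiSystem_rectCl (m : ℕ) : IsPiSystem (rectCl m) := by
  rintro s ⟨x, hx, rfl⟩ t ⟨y, hy, rfl⟩ -
  refine ⟨fun i => min (x i) (y i), fun i => ?_, ?_⟩
  · rcases min_cases (x i) (y i) with ⟨h, -⟩ | ⟨h, -⟩
    · simp only []; rw [h]; exact hx i
    · simp only []; rw [h]; exact hy i
  · ext g
    simp only [Set.mem_inter_iff, Set.mem_setOf_eq, le_min_iff, ← forall_and]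

lemma generateFrom_iic_ereal :
    MeasurableSpace.generateFrom {s : Set EReal | ∃ x : EReal, x ≠ ⊥ ∧ s = Set.Iic x}
      = (inferInstance : MeasurableSpace EReal) := by
  have hb : (inferInstance : MeasurableSpace EReal)
      = MeasurableSpace.generateFrom (Set.range Set.Iic) := by
    rw [BorelSpace.measurable_eq (α := EReal)]; exact borel_eq_generateFrom_Iic EReal
  rw [hb]
  apply le_antisymm
  · refine MeasurableSpace.generateFrom_le ?_
    rintro s ⟨x, -, rfl⟩
    exact MeasurableSpace.measurableSet_generateFrom ⟨x, rfl⟩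
  · refine MeasurableSpace.generateFrom_le ?_
    rintro s ⟨x, rfl⟩
    by_cases hx : x = ⊥
    · subst hx
      have : Set.Iic (⊥ : EReal) = ⋂ k : ℕ, Set.Iic ((-(k:ℝ) : ℝ) : EReal) := by
        ext g
        simp only [Set.mem_Iic, Set.mem_iInter]
        constructor
        · intro hg k
          exact hg.trans bot_le
        · intro hg
          by_contra hc
          have hbot : (⊥ : EReal) < g := lt_of_not_ge hc
          obtain ⟨r, -, hr2⟩ := EReal.exists_between_coe_real hbot
          have hk := hg ⌈-r⌉₊
          have : (-(⌈-r⌉₊ : ℝ) : ℝ) ≤ r := by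
            have := Nat.le_ceil (-r); linarith
          have : ((-(⌈-r⌉₊:ℝ) : ℝ) : EReal) ≤ (r : EReal) := EReal.coe_le_coe_iff.2 this
          exact absurd (hr2.trans_le hk) (not_lt.2 this)
      rw [this]
      exact MeasurableSet.iInter fun k =>
        MeasurableSpace.measurableSet_generateFrom ⟨_, EReal.coe_ne_bot _, rfl⟩
    · exact MeasurableSpace.measurableSet_generateFrom ⟨x, hx, rfl⟩

lemma pi_ereal_generateFrom (m : ℕ) :
    (MeasurableSpace.pi : MeasurableSpace (Fin m → EReal))
      = MeasurableSpace.generateFrom (rectCl m) := by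
  have h := generateFrom_eq_pi (α := fun _ : Fin m => EReal)
      (C := fun _ => {s : Set EReal | ∃ x : EReal, x ≠ ⊥ ∧ s = Set.Iic x})
      (fun _ => generateFrom_iic_ereal)
      (fun _ => ⟨fun _ => Set.Iic ⊤, fun _ => ⟨⊤, by simp, rfl⟩, by simp [Set.iUnion_const]⟩)
  rw [← h]
  congr 1
  ext s
  constructor
  · rintro ⟨f, hf, rfl⟩
    choose x hx hfx using hf
    refine ⟨fun i => x i (Set.mem_univ i), fun i => hx i _, ?_⟩
    ext g
    simp only [Set.mem_univ_pi, Set.mem_setOf_eq]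
    refine forall_congr' fun i => ?_
    rw [hfx i (Set.mem_univ i)]
    rfl
  · rintro ⟨x, hx, rfl⟩
    refine ⟨fun i => Set.Iic (x i), fun i _ => ⟨x i, hx i, rfl⟩, ?_⟩
    ext g
    simp only [Set.mem_univ_pi, Set.mem_Iic, Set.mem_setOf_eq]


lemma measurableSet_U {Ω : Type*} [MeasurableSpace Ω] {m : ℕ} (Y : Fin m → Ω → EReal)
    (hYm : ∀ i, Measurable (Y i)) (x : Fin m → EReal) :
    MeasurableSet {p : Ω × ℝ | ∃ i, x i < (p.2 : EReal) + Y i p.1} := by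
  rw [Set.setOf_exists]
  refine MeasurableSet.iUnion fun i => ?_
  have hm : Measurable fun p : Ω × ℝ => (p.2 : EReal) + Y i p.1 :=
    (measurable_coe_real_ereal.comp measurable_snd).ereal_add' ((hYm i).comp measurable_fst)
  exact hm measurableSet_Ioi

lemma expE_sub_coe (z : EReal) (r : ℝ) :
    expE (z - (r : EReal)) = expE z * ENNReal.ofReal (Real.exp (-r)) := by
  induction z using EReal.rec with
  | bot => rw [EReal.bot_sub]; simp
  | top =>
    rw [EReal.top_sub_coe, expE_top, ENNReal.top_mul (ENNReal.ofReal_pos.2 (Real.exp_pos _)).ne']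
  | coe z =>
    rw [← EReal.coe_sub, expE_coe, expE_coe, ← ENNReal.ofReal_mul (Real.exp_nonneg _),
      ← Real.exp_add, sub_eq_add_neg]

lemma ell_ne_top {Ω : Type*} [MeasurableSpace Ω] (μ : Measure Ω) [IsProbabilityMeasure μ]
    {m : ℕ} (Y : Fin m → Ω → EReal) (hYm : ∀ i, Measurable (Y i))
    (hexp : ∀ i, ∫⁻ ω, expE (Y i ω) ∂μ = 1)
    (x : Fin m → EReal) (hx : ∀ i, x i ≠ ⊥) :
    ∫⁻ ω, ⨆ i, expE (Y i ω - x i) ∂μ ≠ ⊤ := by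
  have hb : ∀ ω, (⨆ i, expE (Y i ω - x i)) ≤ ∑ i, expE (Y i ω - x i) := fun ω =>
    iSup_le fun i => Finset.single_le_sum (f := fun i => expE (Y i ω - x i))
      (fun _ _ => zero_le) (Finset.mem_univ i)
  refine ne_top_of_le_ne_top ?_ (lintegral_mono hb)
  have hmeas : ∀ i : Fin m, Measurable fun ω => expE (Y i ω - x i) := by
    intro i
    exact measurable_expE.comp ((hYm i).ereal_sub' measurable_const)
  rw [lintegral_finset_sum _ (fun i _ => hmeas i)]
  refine (ENNReal.sum_lt_top.2 fun i _ => ?_).ne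
  by_cases hxi : x i = ⊤
  · have hz : ∀ ω, expE (Y i ω - x i) = 0 := fun ω => by rw [hxi, EReal.sub_top, expE_bot]
    simp [hz]
  · have hco : x i = (((x i).toReal : ℝ) : EReal) := (EReal.coe_toReal hxi (hx i)).symm
    have hz : ∀ ω, expE (Y i ω - x i)
        = expE (Y i ω) * ENNReal.ofReal (Real.exp (-(x i).toReal)) := fun ω => by
      rw [hco, expE_sub_coe]
      simp
    simp only [hz]
    rw [lintegral_mul_const' _ _ ENNReal.ofReal_ne_top, hexp i, one_mul]
    exact ENNReal.ofReal_lt_top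

lemma ell_anti {Ω : Type*} [MeasurableSpace Ω] (μ : Measure Ω) {m : ℕ}
    (Y : Fin m → Ω → EReal) {x y : Fin m → EReal} (hxy : ∀ i, x i ≤ y i) :
    ∫⁻ ω, ⨆ i, expE (Y i ω - y i) ∂μ ≤ ∫⁻ ω, ⨆ i, expE (Y i ω - x i) ∂μ :=
  lintegral_mono fun ω => iSup_mono fun i =>
    expE_mono (EReal.sub_le_sub le_rfl (hxy i))

lemma log_expNeg_ratio {A B C : ℝ≥0∞} (hA : A ≠ ⊤) (hB : B ≠ ⊤) (hC : C ≠ ⊤)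
    (hC1 : 1 ≤ C) (hAB : A ≤ B) :
    ENNReal.ofReal (Real.log ((expNeg B).toReal / (expNeg A).toReal) /
        Real.log ((expNeg C).toReal))
      = C⁻¹ * (B - A) := by
  have hval : ∀ L : ℝ≥0∞, L ≠ ⊤ → (expNeg L).toReal = Real.exp (-L.toReal) := by
    intro L hL
    rw [expNeg, if_neg hL, ENNReal.toReal_ofReal (Real.exp_nonneg _)]
  rw [hval _ hA, hval _ hB, hval _ hC]
  rw [← Real.exp_sub]
  rw [Real.log_exp, Real.log_exp]
  have hCpos : 0 < C.toReal := ENNReal.toReal_pos (by intro hz; rw [hz] at hC1; simp at hC1) hC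
  have harith : (-B.toReal - -A.toReal) / -C.toReal = (B.toReal - A.toReal) / C.toReal := by
    rw [div_neg]
    ring_nf
  rw [harith, ENNReal.ofReal_div_of_pos hCpos, ENNReal.ofReal_sub _ ENNReal.toReal_nonneg,
    ENNReal.ofReal_toReal hA, ENNReal.ofReal_toReal hB, ENNReal.ofReal_toReal hC,
    ENNReal.div_eq_inv_mul]


lemma measure_zeta_rect {T Ω Ω' : Type*} [MeasurableSpace Ω] [MeasurableSpace Ω']
    {μ : Measure Ω} {μ' : Measure Ω'} {Z : T → Ω → EReal} {ζ : T → Ω' → ℝ}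
    (hζ : IsAssocMaxStable μ' ζ μ Z) {m : ℕ} (t : Fin m → T)
    (x : Fin m → EReal) (hx : ∀ i, x i ≠ ⊥) :
    μ' {ω | ∀ i, ((ζ (t i) ω : ℝ) : EReal) ≤ x i}
      = expNeg (∫⁻ ω, ⨆ i, expE (Z (t i) ω - x i) ∂μ) := by
  classical
  set k := Fintype.card {i : Fin m // x i ≠ ⊤} with hk
  let e : {i : Fin m // x i ≠ ⊤} ≃ Fin k := Fintype.equivFin _
  set t' : Fin k → T := fun j => t (e.symm j).1 with ht'
  set x' : Fin k → ℝ := fun j => (x (e.symm j).1).toReal with hx'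
  have hco : ∀ i : {i : Fin m // x i ≠ ⊤}, x i.1 = (((x i.1).toReal : ℝ) : EReal) :=
    fun i => (EReal.coe_toReal i.2 (hx i.1)).symm
  have hset : {ω | ∀ i, ((ζ (t i) ω : ℝ) : EReal) ≤ x i}
      = {ω | ∀ j, ζ (t' j) ω ≤ x' j} := by
    ext ω
    simp only [Set.mem_setOf_eq]
    constructor
    · intro hω j
      have := hω (e.symm j).1
      rw [hco (e.symm j)] at this
      exact EReal.coe_le_coe_iff.1 this
    · intro hω i
      by_cases hxi : x i = ⊤
      · rw [hxi]; exact le_top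
      · have hj := hω (e ⟨i, hxi⟩)
        simp only [ht', hx', Equiv.symm_apply_apply] at hj
        rw [hco ⟨i, hxi⟩]
        exact EReal.coe_le_coe_iff.2 hj
  have hsup : ∀ ω, (⨆ j, expE (Z (t' j) ω - (x' j : EReal)))
      = ⨆ i, expE (Z (t i) ω - x i) := by
    intro ω
    apply le_antisymm
    · refine iSup_le fun j => le_iSup_of_le (e.symm j).1 (le_of_eq ?_)
      rw [hco (e.symm j)]
    · refine iSup_le fun i => ?_
      by_cases hxi : x i = ⊤
      · rw [hxi, EReal.sub_top, expE_bot]; exact zero_le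
      · refine le_iSup_of_le (e ⟨i, hxi⟩) (le_of_eq ?_)
        show expE (Z (t i) ω - x i) = expE (Z (t ((e.symm (e ⟨i, hxi⟩)) : {i // x i ≠ ⊤}).1) ω
            - ((x ((e.symm (e ⟨i, hxi⟩)) : {i // x i ≠ ⊤}).1).toReal : EReal))
        rw [Equiv.symm_apply_apply]
        rw [← hco ⟨i, hxi⟩]
  rw [hset, hζ k t' x']
  congr 1
  exact lintegral_congr fun ω => hsup ω


lemma ereal_sub_zero (a : EReal) : a - 0 = a := by
  induction a using EReal.rec with
  | bot => exact EReal.bot_sub _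
  | top => rw [show ((0:EReal)) = ((0:ℝ):EReal) from rfl, EReal.top_sub_coe]
  | coe a => rw [show ((0:EReal)) = ((0:ℝ):EReal) from rfl, ← EReal.coe_sub, sub_zero]

lemma ereal_add_sub_add (u : ℝ) (a : EReal) (z0 : ℝ) (ha : a ≠ ⊤) :
    ((u : EReal) + a) - ((u : EReal) + (z0 : EReal)) = a - (z0 : EReal) := by
  induction a using EReal.rec with
  | bot => rw [EReal.add_bot, ← EReal.coe_add, EReal.bot_sub, EReal.bot_sub]
  | top => exact absurd rfl ha
  | coe a =>
    rw [← EReal.coe_add, ← EReal.coe_add, ← EReal.coe_sub, ← EReal.coe_sub]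
    norm_cast
    ring


end Helpers

/-- Theorem 1 (i).
If `P(Z(h) > -∞) = 1`, then for distinct `t₁ = h, t₂, …, tₙ₊₁` the vector
`(Ξ_h Z(t₂), …, Ξ_h Z(tₙ₊₁))` has the same law as `(W₂ - W₁, …, Wₙ₊₁ - W₁)` conditioned on
`W₁ > 0`, where `W` is the associated generalised Pareto vector of `(ζ_Z(t₁), …, ζ_Z(tₙ₊₁))`,
i.e. the random vector with distribution function
`G(x) = (ln H(0))⁻¹ ln( H(min(x,0)) / H(x) )`, `H` the d.f. of `(ζ_Z(t₁), …, ζ_Z(tₙ₊₁))`. -/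
theorem statement_1 {T Ω Ω' Ω'' : Type*}
    [MeasurableSpace Ω] [MeasurableSpace Ω'] [MeasurableSpace Ω'']
    (μ : Measure Ω) (μ' : Measure Ω') (μ'' : Measure Ω'')
    [IsProbabilityMeasure μ] [IsProbabilityMeasure μ'] [IsProbabilityMeasure μ'']
    (Z : T → Ω → EReal) (hZm : ∀ t, Measurable (Z t))
    (hZne : ∀ t, ∀ᵐ ω ∂μ, Z t ω ≠ ⊤)
    (hZexp : ∀ t, ∫⁻ ω, expE (Z t ω) ∂μ = 1)
    (ζ : T → Ω' → ℝ) (hζ : IsAssocMaxStable μ' ζ μ Z)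
    (n : ℕ) (t : Fin (n + 1) → T) (ht : Function.Injective t)
    (h : T) (hth : t 0 = h)
    (hfin : μ {ω | Z h ω = ⊥} = 0)
    -- `W` is the associated generalised Pareto vector: its d.f. (on `[-∞,∞]ⁿ⁺¹`) is `G`
    (W : Fin (n + 1) → Ω'' → EReal) (hWm : ∀ i, Measurable (W i))
    (hW : ∀ x : Fin (n + 1) → EReal,
      μ'' {ω | ∀ i, W i ω ≤ x i} =
        ENNReal.ofReal
          (Real.log ((μ' {ω | ∀ i, ((ζ (t i) ω : ℝ) : EReal) ≤ min (x i) 0}).toReal /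
              (μ' {ω | ∀ i, ((ζ (t i) ω : ℝ) : EReal) ≤ x i}).toReal) /
            Real.log ((μ' {ω | ∀ i, ζ (t i) ω ≤ 0}).toReal))) :
    Measure.map (fun (f : T → EReal) (i : Fin n) => f (t i.succ)) (ThetaLaw μ Z h)
      = Measure.map (fun ω (i : Fin n) => W i.succ ω - W 0 ω)
          (ProbabilityTheory.cond μ'' {ω | 0 < W 0 ω}) := by
  classical
  -- measurability of basic maps
  have hwm : Measurable fun ω (i : Fin (n+1)) => W i ω := measurable_pi_lambda _ hWm
  have hΦm : Measurable fun (p : Ω × ℝ) (i : Fin (n+1)) => ((p.2 : ℝ) : EReal) + Z (t i) p.1 :=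
    measurable_pi_lambda _ fun i =>
      (measurable_coe_real_ereal.comp measurable_snd).ereal_add' ((hZm (t i)).comp measurable_fst)
  have haeT : ∀ᵐ ω ∂μ, ∀ i : Fin (n+1), Z (t i) ω ≠ ⊤ := ae_all_iff.2 fun i => hZne (t i)
  have haeB : ∀ᵐ ω ∂μ, Z h ω ≠ ⊥ := by
    rw [ae_iff]
    have hs : {ω | ¬ Z h ω ≠ ⊥} = {ω | Z h ω = ⊥} := by ext ω; simp
    rw [hs]; exact hfin
  -- the value of κ on union-of-rays sets
  have hUval : ∀ x : Fin (n+1) → EReal, (∀ i, x i ≠ ⊥) →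
      (μ.prod expM) {p : Ω × ℝ | ∃ i, x i < (p.2 : EReal) + Z (t i) p.1}
        = ∫⁻ ω, ⨆ i, expE (Z (t i) ω - x i) ∂μ := fun x hx =>
    kappa_exists_lt μ (fun i ω => Z (t i) ω) (fun i => hZm (t i)) haeT x hx
  -- ℓ₀ and its properties
  have h0U : (μ.prod expM) {p : Ω × ℝ | ∃ i : Fin (n+1), (0:EReal) < (p.2 : EReal) + Z (t i) p.1}
      = ∫⁻ ω, ⨆ i : Fin (n+1), expE (Z (t i) ω - (0:EReal)) ∂μ :=
    hUval (fun _ => (0:EReal)) (fun _ => by simp)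
  have hL0eq : ∫⁻ ω, ⨆ i : Fin (n+1), expE (Z (t i) ω - (0:EReal)) ∂μ
      = ∫⁻ ω, ⨆ i : Fin (n+1), expE (Z (t i) ω) ∂μ :=
    lintegral_congr fun ω => by simp only [ereal_sub_zero]
  set L0 : ℝ≥0∞ := ∫⁻ ω, ⨆ i : Fin (n+1), expE (Z (t i) ω) ∂μ with hL0def
  have hL0top : L0 ≠ ⊤ := by
    rw [← hL0eq]
    exact ell_ne_top μ (fun i ω => Z (t i) ω) (fun i => hZm (t i)) (fun i => hZexp (t i))
      (fun _ => (0:EReal)) (fun _ => by simp)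
  have hL0one : (1:ℝ≥0∞) ≤ L0 := by
    rw [← hZexp (t 0)]
    exact lintegral_mono fun ω => le_iSup (fun i : Fin (n+1) => expE (Z (t i) ω)) 0
  have hL0ne0 : L0 ≠ 0 := by
    intro hz
    rw [hz] at hL0one
    simp at hL0one
  -- the candidate law of W
  set Epos : Set (Fin (n+1) → EReal) := {g | ∃ i, (0:EReal) < g i} with hEposdef
  have hEposm : MeasurableSet Epos := by
    rw [hEposdef, Set.setOf_exists]
    exact MeasurableSet.iUnion fun i => measurable_pi_apply i measurableSet_Ioi
  set νW : Measure (Fin (n+1) → EReal) :=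
    L0⁻¹ • ((Measure.map (fun (p : Ω × ℝ) (i : Fin (n+1)) => ((p.2 : ℝ) : EReal) + Z (t i) p.1)
      (μ.prod expM)).restrict Epos) with hνWdef
  have hνWapp : ∀ S : Set (Fin (n+1) → EReal), MeasurableSet S →
      νW S = L0⁻¹ * (μ.prod expM)
        ((fun (p : Ω × ℝ) (i : Fin (n+1)) => ((p.2 : ℝ) : EReal) + Z (t i) p.1) ⁻¹' (S ∩ Epos)) := by
    intro S hS
    rw [hνWdef, Measure.smul_apply, Measure.restrict_apply hS,
      Measure.map_apply hΦm (hS.inter hEposm), smul_eq_mul]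
  have hEpre : (fun (p : Ω × ℝ) (i : Fin (n+1)) => ((p.2 : ℝ) : EReal) + Z (t i) p.1) ⁻¹' Epos
      = {p : Ω × ℝ | ∃ i : Fin (n+1), (0:EReal) < (p.2 : EReal) + Z (t i) p.1} := rfl
  -- identification of the law of W
  have hlaw : Measure.map (fun ω (i : Fin (n+1)) => W i ω) μ'' = νW := by
    haveI : IsProbabilityMeasure (Measure.map (fun ω (i : Fin (n+1)) => W i ω) μ'') :=
      Measure.isProbabilityMeasure_map hwm.aemeasurable
    refine ext_of_generate_finite (rectCl (n+1)) (pi_ereal_generateFrom (n+1))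
      (isPiSystem_rectCl (n+1)) ?_ ?_
    · rintro s ⟨x, hx, rfl⟩
      have hrm : MeasurableSet {g : Fin (n+1) → EReal | ∀ i, g i ≤ x i} := by
        rw [Set.setOf_forall]
        exact MeasurableSet.iInter fun i => measurable_pi_apply i measurableSet_Iic
      have hxmin : ∀ i, min (x i) 0 ≠ ⊥ := by
        intro i
        rcases min_cases (x i) (0:EReal) with ⟨hm, -⟩ | ⟨hm, -⟩
        · rw [hm]; exact hx i
        · rw [hm]; simp
      -- values of ℓ at x and min x 0
      have hLxtop : (∫⁻ ω, ⨆ i, expE (Z (t i) ω - x i) ∂μ) ≠ ⊤ :=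
        ell_ne_top μ (fun i ω => Z (t i) ω) (fun i => hZm (t i)) (fun i => hZexp (t i)) x hx
      have hLmtop : (∫⁻ ω, ⨆ i, expE (Z (t i) ω - min (x i) 0) ∂μ) ≠ ⊤ :=
        ell_ne_top μ (fun i ω => Z (t i) ω) (fun i => hZm (t i)) (fun i => hZexp (t i))
          (fun i => min (x i) 0) hxmin
      have hLle : (∫⁻ ω, ⨆ i, expE (Z (t i) ω - x i) ∂μ)
          ≤ ∫⁻ ω, ⨆ i, expE (Z (t i) ω - min (x i) 0) ∂μ :=
        ell_anti μ (fun i ω => Z (t i) ω) (fun i => min_le_left _ _)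
      -- LHS : from hW
      rw [Measure.map_apply hwm hrm]
      have hpre : ((fun ω (i : Fin (n+1)) => W i ω) ⁻¹' {g | ∀ i, g i ≤ x i})
          = {ω | ∀ i, W i ω ≤ x i} := rfl
      rw [hpre, hW x]
      rw [measure_zeta_rect hζ t (fun i => min (x i) 0) hxmin, measure_zeta_rect hζ t x hx]
      have h0' : μ' {ω | ∀ i, ζ (t i) ω ≤ 0}
          = expNeg (∫⁻ ω, ⨆ i : Fin (n+1), expE (Z (t i) ω - ((0:ℝ) : EReal)) ∂μ) :=
        hζ (n+1) t (fun _ => (0:ℝ))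
      have h0'' : ∫⁻ ω, ⨆ i : Fin (n+1), expE (Z (t i) ω - ((0:ℝ) : EReal)) ∂μ = L0 := by
        rw [hL0def]
        exact lintegral_congr fun ω => by
          simp only [show ((0:ℝ):EReal) = (0:EReal) from rfl, ereal_sub_zero]
      rw [h0', h0'', log_expNeg_ratio hLxtop hLmtop hL0top hL0one hLle]
      -- RHS : νW of the rectangle
      rw [hνWapp _ hrm]
      have hsub : {p : Ω × ℝ | ∃ i, x i < (p.2 : EReal) + Z (t i) p.1}
          ⊆ {p : Ω × ℝ | ∃ i, min (x i) 0 < (p.2 : EReal) + Z (t i) p.1} := by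
        rintro p ⟨i, hi⟩
        exact ⟨i, (min_le_left _ _).trans_lt hi⟩
      have hseteq : (fun (p : Ω × ℝ) (i : Fin (n+1)) => ((p.2 : ℝ) : EReal) + Z (t i) p.1) ⁻¹'
            ({g : Fin (n+1) → EReal | ∀ i, g i ≤ x i} ∩ Epos)
          = {p : Ω × ℝ | ∃ i, min (x i) 0 < (p.2 : EReal) + Z (t i) p.1}
            \ {p : Ω × ℝ | ∃ i, x i < (p.2 : EReal) + Z (t i) p.1} := by
        ext p
        simp only [Set.mem_preimage, Set.mem_inter_iff, Set.mem_setOf_eq, Set.mem_diff,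
          not_exists, not_lt, hEposdef]
        constructor
        · rintro ⟨hle, i, hpos⟩
          exact ⟨⟨i, (min_le_right _ _).trans_lt hpos⟩, hle⟩
        · rintro ⟨⟨i, hi⟩, hle⟩
          refine ⟨hle, i, ?_⟩
          rcases le_total (x i) 0 with hc | hc
          · exact absurd ((min_eq_left hc) ▸ hi) (not_lt.2 (hle i))
          · rw [min_eq_right hc] at hi; exact hi
      rw [hseteq, measure_diff hsub
        (measurableSet_U (fun i ω => Z (t i) ω) (fun i => hZm (t i)) x).nullMeasurableSet
        (by rw [hUval x hx]; exact hLxtop),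
        hUval x hx, hUval (fun i => min (x i) 0) hxmin]
    · -- total mass
      have huniv : νW Set.univ = 1 := by
        rw [hνWapp _ MeasurableSet.univ, Set.univ_inter, hEpre, h0U, hL0eq,
          ENNReal.inv_mul_cancel hL0ne0 hL0top]
      rw [huniv]
      exact measure_univ
  -- value of μ'' on {W 0 > 0}
  have hP0m : MeasurableSet {ω | (0:EReal) < W 0 ω} := hWm 0 measurableSet_Ioi
  have hQ0m : MeasurableSet {g : Fin (n+1) → EReal | (0:EReal) < g 0} :=
    measurable_pi_apply 0 measurableSet_Ioi
  have hκ0g : (μ.prod expM)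
      ((fun (p : Ω × ℝ) (i : Fin (n+1)) => ((p.2 : ℝ) : EReal) + Z (t i) p.1) ⁻¹'
        {g : Fin (n+1) → EReal | (0:EReal) < g 0}) = 1 := by
    have hks : (μ.prod expM) {p : Ω × ℝ | ((0:EReal) < (p.2 : EReal) + Z h p.1)
          ∧ p.1 ∈ (Set.univ : Set Ω)}
        = ∫⁻ ω in Set.univ, expE (Z h ω) ∂μ :=
      kappa_sec μ (Z h) (hZm h) (hZne h) Set.univ MeasurableSet.univ
    have hset : (fun (p : Ω × ℝ) (i : Fin (n+1)) => ((p.2 : ℝ) : EReal) + Z (t i) p.1) ⁻¹'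
          {g : Fin (n+1) → EReal | (0:EReal) < g 0}
        = {p : Ω × ℝ | ((0:EReal) < (p.2 : EReal) + Z h p.1) ∧ p.1 ∈ (Set.univ : Set Ω)} := by
      ext p
      simp [hth]
    rw [hset, hks, Measure.restrict_univ, hZexp h]
  have hμ''P0 : μ'' {ω | (0:EReal) < W 0 ω} = L0⁻¹ := by
    have hpre0 : {ω | (0:EReal) < W 0 ω}
        = (fun ω (i : Fin (n+1)) => W i ω) ⁻¹' {g | (0:EReal) < g 0} := rfl
    rw [hpre0, ← Measure.map_apply hwm hQ0m, hlaw, hνWapp _ hQ0m]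
    have hQ0Epos : {g : Fin (n+1) → EReal | (0:EReal) < g 0} ∩ Epos
        = {g : Fin (n+1) → EReal | (0:EReal) < g 0} :=
      Set.inter_eq_left.2 fun g hg => ⟨0, hg⟩
    rw [hQ0Epos, hκ0g, mul_one]
  have hP0ne : μ'' {ω | (0:EReal) < W 0 ω} ≠ 0 := by
    rw [hμ''P0]
    exact ENNReal.inv_ne_zero.2 hL0top
  -- the two mapped measures are probability measures
  have hw'm : Measurable fun ω (i : Fin n) => W i.succ ω - W 0 ω :=
    measurable_pi_lambda _ fun i => (hWm i.succ).ereal_sub' (hWm 0)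
  have hprojm : Measurable fun (f : T → EReal) (i : Fin n) => f (t i.succ) :=
    measurable_pi_lambda _ fun i => measurable_pi_apply _
  have hdiffm : Measurable fun (f : T → EReal) (t' : T) => f t' - f h :=
    measurable_pi_lambda _ fun t' => (measurable_pi_apply t').ereal_sub' (measurable_pi_apply h)
  have hpathm : Measurable fun ω (t' : T) => Z t' ω := measurable_pi_lambda _ fun t' => hZm t'
  have hexpEh : Measurable fun f : T → EReal => expE (f h) :=
    measurable_expE.comp (measurable_pi_apply h)
  haveI hcondP : IsProbabilityMeasure (ProbabilityTheory.cond μ'' {ω | 0 < W 0 ω}) :=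
    ProbabilityTheory.cond_isProbabilityMeasure hP0ne
  haveI : IsProbabilityMeasure (Measure.map (fun ω (i : Fin n) => W i.succ ω - W 0 ω)
      (ProbabilityTheory.cond μ'' {ω | 0 < W 0 ω})) :=
    Measure.isProbabilityMeasure_map hw'm.aemeasurable
  have hTtot : ThetaLaw μ Z h Set.univ = 1 := by
    rw [ThetaLaw, Measure.map_apply hdiffm MeasurableSet.univ, Set.preimage_univ, tiltLaw,
      withDensity_apply _ MeasurableSet.univ, Measure.restrict_univ, pathLaw,
      lintegral_map hexpEh hpathm, hZexp h]
  haveI : IsProbabilityMeasure (ThetaLaw μ Z h) := ⟨hTtot⟩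
  haveI : IsProbabilityMeasure (Measure.map
      (fun (f : T → EReal) (i : Fin n) => f (t i.succ)) (ThetaLaw μ Z h)) :=
    Measure.isProbabilityMeasure_map hprojm.aemeasurable
  -- final identification
  refine ext_of_generate_finite (rectCl n) (pi_ereal_generateFrom n) (isPiSystem_rectCl n) ?_
    (by simp [measure_univ])
  rintro s ⟨y, hy, rfl⟩
  have hym : MeasurableSet {g : Fin n → EReal | ∀ i, g i ≤ y i} := by
    rw [Set.setOf_forall]
    exact MeasurableSet.iInter fun i => measurable_pi_apply i measurableSet_Iic
  have hDm : MeasurableSet {ω : Ω | ∀ i : Fin n, Z (t i.succ) ω - Z h ω ≤ y i} := by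
    rw [Set.setOf_forall]
    exact MeasurableSet.iInter fun i => ((hZm _).ereal_sub' (hZm h)) measurableSet_Iic
  -- LHS
  rw [Measure.map_apply hprojm hym, ThetaLaw, Measure.map_apply hdiffm (hprojm hym),
    tiltLaw, withDensity_apply _ (hdiffm (hprojm hym)), pathLaw,
    setLIntegral_map (hdiffm (hprojm hym)) hexpEh hpathm]
  have hDpre : ((fun ω (t' : T) => Z t' ω) ⁻¹' ((fun (f : T → EReal) (t' : T) => f t' - f h) ⁻¹'
        ((fun (f : T → EReal) (i : Fin n) => f (t i.succ)) ⁻¹' {g | ∀ i, g i ≤ y i})))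
      = {ω : Ω | ∀ i : Fin n, Z (t i.succ) ω - Z h ω ≤ y i} := rfl
  rw [hDpre]
  -- RHS
  have hQm : MeasurableSet {g : Fin (n+1) → EReal |
      ((0:EReal) < g 0) ∧ ∀ i : Fin n, g i.succ - g 0 ≤ y i} := by
    have hsplit : {g : Fin (n+1) → EReal | ((0:EReal) < g 0) ∧ ∀ i : Fin n, g i.succ - g 0 ≤ y i}
        = {g : Fin (n+1) → EReal | (0:EReal) < g 0}
          ∩ {g : Fin (n+1) → EReal | ∀ i : Fin n, g i.succ - g 0 ≤ y i} := rfl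
    rw [hsplit]
    refine MeasurableSet.inter hQ0m ?_
    rw [Set.setOf_forall]
    exact MeasurableSet.iInter fun i =>
      ((measurable_pi_apply i.succ).ereal_sub' (measurable_pi_apply 0)) measurableSet_Iic
  rw [Measure.map_apply hw'm hym, ProbabilityTheory.cond_apply hP0m, hμ''P0, inv_inv]
  have hpre2 : {ω | (0:EReal) < W 0 ω} ∩ ((fun ω (i : Fin n) => W i.succ ω - W 0 ω) ⁻¹'
        {g : Fin n → EReal | ∀ i, g i ≤ y i})
      = (fun ω (i : Fin (n+1)) => W i ω) ⁻¹'
        {g : Fin (n+1) → EReal | ((0:EReal) < g 0) ∧ ∀ i : Fin n, g i.succ - g 0 ≤ y i} := rfl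
  rw [hpre2, ← Measure.map_apply hwm hQm, hlaw, hνWapp _ hQm]
  have hQEpos : {g : Fin (n+1) → EReal | ((0:EReal) < g 0) ∧ ∀ i : Fin n, g i.succ - g 0 ≤ y i}
      ∩ Epos = {g : Fin (n+1) → EReal | ((0:EReal) < g 0) ∧ ∀ i : Fin n, g i.succ - g 0 ≤ y i} :=
    Set.inter_eq_left.2 fun g hg => ⟨0, hg.1⟩
  rw [hQEpos]
  -- κ of the diff event
  have hκG : ∀ᵐ p ∂(μ.prod expM), Z h p.1 ≠ ⊥ ∧ ∀ i : Fin (n+1), Z (t i) p.1 ≠ ⊤ := by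
    have hGae : ∀ᵐ ω ∂μ, Z h ω ≠ ⊥ ∧ ∀ i : Fin (n+1), Z (t i) ω ≠ ⊤ := haeB.and haeT
    rw [ae_iff] at hGae ⊢
    have hset : {p : Ω × ℝ | ¬ (Z h p.1 ≠ ⊥ ∧ ∀ i : Fin (n+1), Z (t i) p.1 ≠ ⊤)}
        = {ω : Ω | ¬ (Z h ω ≠ ⊥ ∧ ∀ i : Fin (n+1), Z (t i) ω ≠ ⊤)} ×ˢ (Set.univ : Set ℝ) := by
      ext p
      simp [Set.mem_prod]
    rw [hset, Measure.prod_prod, hGae, zero_mul]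
  have hκQ : (μ.prod expM) ((fun (p : Ω × ℝ) (i : Fin (n+1)) => ((p.2 : ℝ) : EReal) + Z (t i) p.1)
        ⁻¹' {g : Fin (n+1) → EReal | ((0:EReal) < g 0) ∧ ∀ i : Fin n, g i.succ - g 0 ≤ y i})
      = ∫⁻ ω in {ω : Ω | ∀ i : Fin n, Z (t i.succ) ω - Z h ω ≤ y i}, expE (Z h ω) ∂μ := by
    have hks : (μ.prod expM) {p : Ω × ℝ | ((0:EReal) < (p.2 : EReal) + Z h p.1)
          ∧ p.1 ∈ {ω : Ω | ∀ i : Fin n, Z (t i.succ) ω - Z h ω ≤ y i}}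
        = ∫⁻ ω in {ω : Ω | ∀ i : Fin n, Z (t i.succ) ω - Z h ω ≤ y i}, expE (Z h ω) ∂μ :=
      kappa_sec μ (Z h) (hZm h) (hZne h) _ hDm
    rw [← hks]
    refine measure_congr (Filter.eventuallyEq_set.2 (hκG.mono fun p hp => ?_))
    obtain ⟨hpb, hpt⟩ := hp
    have hz0 : Z h p.1 = (((Z h p.1).toReal : ℝ) : EReal) :=
      (EReal.coe_toReal (hth ▸ hpt 0) hpb).symm
    have hdiffeq : ∀ i : Fin n,
        (((p.2 : ℝ) : EReal) + Z (t i.succ) p.1) - (((p.2 : ℝ) : EReal) + Z (t 0) p.1)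
          = Z (t i.succ) p.1 - Z h p.1 := by
      intro i
      rw [hth]
      conv_lhs => rw [hz0]
      conv_rhs => rw [hz0]
      exact ereal_add_sub_add p.2 (Z (t i.succ) p.1) (Z h p.1).toReal (hpt i.succ)
    simp only [Set.mem_preimage, Set.mem_setOf_eq]
    constructor
    · rintro ⟨h1, h2⟩
      refine ⟨by rw [← hth]; exact h1, fun i => ?_⟩
      have := h2 i
      rw [hdiffeq i] at this
      exact this
    · rintro ⟨h1, h2⟩
      refine ⟨by rw [hth]; exact h1, fun i => ?_⟩
      rw [hdiffeq i]
      exact h2 i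
  rw [hκQ, ← mul_assoc, ENNReal.mul_inv_cancel hL0ne0 hL0top, one_mul]


end
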